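/- If τ ∈ [0,1] is a threshold for V with λNA < τ and T(τ) ≥ τ, then V(λAA) = C_L/(1−β) and V(λNA) = ( (1−λNA)·C_HN + λNA·C_HA + β·λNA·C_L/(1−β) ) / ( 1 − β·(1−λNA) ). -/

import Mathlib

/-- Two-state consumer model: transition probabilities `lNA ≤ lAA`, costs
`CHN ≤ CL ≤ CHA`, discount factor `β ∈ (0,1)`. -/
structure CouponModel where
  lNA : ℝ
  lAA : ℝ
  CHN : ℝ
  CL : ℝ
  CHA : ℝ
  β : ℝ
  lNA_nonneg : 0 ≤ lNA
  lNA_le_lAA : lNA ≤ lAA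
  lAA_le_one : lAA ≤ 1
  CHN_le_CL : CHN ≤ CL
  CL_le_CHA : CL ≤ CHA
  β_pos : 0 < β
  β_lt_one : β < 1

namespace CouponModel

/-- Belief-update map `T(p) = (1-p)·λNA + p·λAA`. -/
noncomputable def T (M : CouponModel) (p : ℝ) : ℝ := (1 - p) * M.lNA + p * M.lAA

/-- Bellman operator. -/
noncomputable def B (M : CouponModel) (f : ℝ → ℝ) (p : ℝ) : ℝ :=
  min (M.CL + M.β * f (M.T p))
    ((1 - p) * M.CHN + p * M.CHA + M.β * ((1 - p) * f M.lNA + p * f M.lAA))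

/-- A function `f : ℝ → ℝ` is bounded on the belief space `[0,1]`. -/
def IsBdd (f : ℝ → ℝ) : Prop := ∃ C : ℝ, ∀ p ∈ Set.Icc (0:ℝ) 1, |f p| ≤ C

/-- `V` is a bounded fixed point of the Bellman operator on `[0,1]`. -/
def IsValue (M : CouponModel) (V : ℝ → ℝ) : Prop :=
  IsBdd V ∧ ∀ p ∈ Set.Icc (0:ℝ) 1, V p = M.B V p

/-- Value of offering the low-privacy coupon at belief `p`. -/
noncomputable def LPval (M : CouponModel) (V : ℝ → ℝ) (p : ℝ) : ℝ :=
  M.CL + M.β * V (M.T p)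

/-- Value of offering the high-privacy coupon at belief `p`. -/
noncomputable def HPval (M : CouponModel) (V : ℝ → ℝ) (p : ℝ) : ℝ :=
  (1 - p) * M.CHN + p * M.CHA + M.β * ((1 - p) * V M.lNA + p * V M.lAA)

/-- `τ` is a threshold for `V`: HP is optimal below `τ`, LP is optimal above `τ`. -/
def IsThreshold (M : CouponModel) (V : ℝ → ℝ) (τ : ℝ) : Prop :=
  τ ∈ Set.Icc (0:ℝ) 1 ∧
    (∀ p ∈ Set.Icc (0:ℝ) τ, V p = M.HPval V p) ∧
    (∀ p ∈ Set.Icc τ (1:ℝ), V p = M.LPval V p)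

end CouponModel

/-- If `τ` is a threshold for `V` with `λNA < τ` and `T(τ) ≥ τ`, then
`V(λAA) = C_L/(1-β)` and
`V(λNA) = ((1-λNA)·C_HN + λNA·C_HA + β·λNA·C_L/(1-β)) / (1 - β·(1-λNA))`. -/
theorem value_at_transitions (M : CouponModel) (V : ℝ → ℝ) (hV : M.IsValue V)
    (τ : ℝ) (hτ : M.IsThreshold V τ) (hlt : M.lNA < τ) (hT : τ ≤ M.T τ) :
    V M.lAA = M.CL / (1 - M.β) ∧
    V M.lNA = ((1 - M.lNA) * M.CHN + M.lNA * M.CHA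
        + M.β * M.lNA * M.CL / (1 - M.β)) / (1 - M.β * (1 - M.lNA)) := by
  obtain ⟨⟨C, hC⟩, _⟩ := hV
  obtain ⟨⟨hτ0, hτ1⟩, hHP, hLP⟩ := hτ
  have hβ0 := M.β_pos
  have hβ1 := M.β_lt_one
  have h1β : (0:ℝ) < 1 - M.β := by linarith
  have hτpos : 0 < τ := lt_of_le_of_lt M.lNA_nonneg hlt
  have hTτ : τ ≤ (1 - τ) * M.lNA + τ * M.lAA := hT
  have hτle : τ ≤ M.lAA := by
    nlinarith [mul_le_mul_of_nonneg_left (le_of_lt hlt) (sub_nonneg.2 hτ1)]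
  -- invariance of [τ,1] under T
  have hmaps : ∀ p ∈ Set.Icc τ (1:ℝ), M.T p ∈ Set.Icc τ (1:ℝ) := by
    intro p ⟨hp1, hp2⟩
    constructor
    · have : (p - τ) * (M.lAA - M.lNA) ≥ 0 :=
        mul_nonneg (by linarith) (by linarith [M.lNA_le_lAA])
      have : M.T p - M.T τ ≥ 0 := by unfold CouponModel.T; nlinarith
      linarith
    · unfold CouponModel.T
      nlinarith [M.lNA_le_lAA, M.lAA_le_one, M.lNA_nonneg]
  have hval : ∀ p ∈ Set.Icc τ (1:ℝ), V p = M.CL + M.β * V (M.T p) := by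
    intro p hp; exact hLP p hp
  set c : ℝ := M.CL / (1 - M.β) with hc
  set K : ℝ := C + |c| with hK
  have hbound : ∀ n : ℕ, ∀ p ∈ Set.Icc τ (1:ℝ), |V p - c| ≤ M.β ^ n * K := by
    intro n
    induction n with
    | zero =>
      intro p hp
      have hp01 : p ∈ Set.Icc (0:ℝ) 1 := ⟨le_trans hτ0 hp.1, hp.2⟩
      have := hC p hp01
      calc |V p - c| ≤ |V p| + |c| := abs_sub _ _
        _ ≤ C + |c| := by linarith
        _ = M.β ^ 0 * K := by simp [hK]
    | succ n ih =>
      intro p hp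
      have hTp := hmaps p hp
      have h1 : V p - c = M.β * (V (M.T p) - c) := by
        rw [hval p hp, hc]
        field_simp
        ring
      rw [h1, abs_mul, abs_of_pos hβ0]
      have := ih (M.T p) hTp
      calc M.β * |V (M.T p) - c| ≤ M.β * (M.β ^ n * K) :=
            mul_le_mul_of_nonneg_left this (le_of_lt hβ0)
        _ = M.β ^ (n + 1) * K := by ring
  have hVc : ∀ p ∈ Set.Icc τ (1:ℝ), V p = c := by
    intro p hp
    have hlim : Filter.Tendsto (fun n : ℕ => M.β ^ n * K) Filter.atTop (nhds 0) := by
      have := tendsto_pow_atTop_nhds_zero_of_lt_one (le_of_lt hβ0) hβ1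
      simpa using this.mul_const K
    have habs : |V p - c| ≤ 0 :=
      ge_of_tendsto' hlim (fun n => hbound n p hp)
    have := abs_nonpos_iff.mp habs
    linarith [sub_eq_zero.mp this, sub_eq_zero.mpr (rfl : c = c)]
  have hAA : V M.lAA = c := hVc M.lAA ⟨hτle, M.lAA_le_one⟩
  refine ⟨hAA, ?_⟩
  have hNA : V M.lNA = M.HPval V M.lNA :=
    hHP M.lNA ⟨M.lNA_nonneg, le_of_lt hlt⟩
  unfold CouponModel.HPval at hNA
  rw [hAA] at hNA
  have hden : 0 < 1 - M.β * (1 - M.lNA) := by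
    have hl1 : M.lNA ≤ 1 := le_trans M.lNA_le_lAA M.lAA_le_one
    nlinarith [M.lNA_nonneg]
  rw [hc] at hNA
  field_simp at hNA ⊢
  rw [eq_div_iff (ne_of_gt (by nlinarith [hden]))]
  linear_combination hNA
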